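/- Assume the normalization ‖m'‖_{L∞(0,1)} + ‖m''‖_{L∞(0,1)} + max_{[0,1]} c − min_{[0,1]} c ≤ 1/2. Then there exists a constant M > 0 such that for every s ≥ 1 and every principal eigenfunction w(s,·) as in the context, max_{x ∈ [0,1]} w(s,x) ≤ M s^{1/2}. -/

import Mathlib

open MeasureTheory Filter Set

/-- The Neumann principal eigenvalue of `-φ'' - 2 s m' φ' + c φ = λ φ` on `(0,1)`,
via its variational characterization. -/
noncomputable def lambdaN (m c : ℝ → ℝ) (s : ℝ) : ℝ :=
  sInf {l : ℝ | ∃ φ : ℝ → ℝ, ContDiff ℝ 1 φ ∧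
    (∫ x in (0:ℝ)..1, Real.exp (2 * s * m x) * (φ x) ^ 2) = 1 ∧
    l = ∫ x in (0:ℝ)..1, Real.exp (2 * s * m x) * ((deriv φ x) ^ 2 + c x * (φ x) ^ 2)}

/-- `v` is a positive, `L²`-normalized principal eigenfunction (in the transformed
variable `w = e^{s m} φ`) associated with the eigenvalue `lam` and parameter `s`. -/
def IsPrincipalEigenfunction (m c : ℝ → ℝ) (lam s : ℝ) (v : ℝ → ℝ) : Prop :=
  ContDiff ℝ 2 v ∧ (∀ x ∈ Set.Icc (0:ℝ) 1, 0 < v x) ∧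
  (∀ x ∈ Set.Ioo (0:ℝ) 1,
    -(deriv (deriv v) x) + (s ^ 2 * (deriv m x) ^ 2 + s * deriv (deriv m) x + c x) * v x
      = lam * v x) ∧
  deriv v 0 = s * v 0 * deriv m 0 ∧ deriv v 1 = s * v 1 * deriv m 1 ∧
  (∫ x in (0:ℝ)..1, (v x) ^ 2) = 1

lemma contDiff_one_deriv {v : ℝ → ℝ} (h : ContDiff ℝ 2 v) : ContDiff ℝ 1 (deriv v) := by
  have h' : ContDiff ℝ (1+1 : ℕ) v := by norm_num at h ⊢; exact h
  exact (contDiff_succ_iff_deriv.mp (by exact_mod_cast h')).2.2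

lemma abs_intInt_le {g : ℝ → ℝ} (hg : Continuous g) {a b : ℝ}
    (ha : a ∈ Set.Icc (0:ℝ) 1) (hb : b ∈ Set.Icc (0:ℝ) 1) :
    |∫ x in a..b, g x| ≤ ∫ x in (0:ℝ)..1, |g x| := by
  have habs : Continuous fun x => |g x| := hg.abs
  have key : ∀ u w : ℝ, u ∈ Set.Icc (0:ℝ) 1 → w ∈ Set.Icc (0:ℝ) 1 → u ≤ w →
      |∫ x in u..w, g x| ≤ ∫ x in (0:ℝ)..1, |g x| := by
    intro u w hu hw huw
    refine (intervalIntegral.abs_integral_le_integral_abs huw).trans ?_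
    exact intervalIntegral.integral_mono_interval hu.1 huw hw.2
      (Filter.Eventually.of_forall fun x => abs_nonneg _)
      (habs.intervalIntegrable 0 1)
  rcases le_total a b with h | h
  · exact key a b ha hb h
  · rw [intervalIntegral.integral_symm, abs_neg]; exact key b a hb ha h

lemma lambdaN_le_sSup (m c : ℝ → ℝ) (hm : Continuous m) (hc : Continuous c) (s : ℝ) :
    lambdaN m c s ≤ sSup (c '' Set.Icc (0:ℝ) 1) := by
  set Cmax := sSup (c '' Set.Icc (0:ℝ) 1) with hCmax
  set Cmin := sInf (c '' Set.Icc (0:ℝ) 1) with hCmin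
  have hcomp : IsCompact (c '' Set.Icc (0:ℝ) 1) :=
    (isCompact_Icc).image hc
  have hne : (c '' Set.Icc (0:ℝ) 1).Nonempty := ⟨c 0, ⟨0, by norm_num, rfl⟩⟩
  have hble : ∀ x ∈ Set.Icc (0:ℝ) 1, c x ≤ Cmax := fun x hx =>
    le_csSup hcomp.bddAbove ⟨x, hx, rfl⟩
  have hbge : ∀ x ∈ Set.Icc (0:ℝ) 1, Cmin ≤ c x := fun x hx =>
    csInf_le hcomp.bddBelow ⟨x, hx, rfl⟩
  have hexp : Continuous fun x => Real.exp (2 * s * m x) :=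
    (Real.continuous_exp.comp (continuous_const.mul hm))
  -- I > 0
  have hIpos : 0 < ∫ x in (0:ℝ)..1, Real.exp (2 * s * m x) := by
    apply intervalIntegral.intervalIntegral_pos_of_pos_on
      (hexp.intervalIntegrable 0 1) (fun x _ => Real.exp_pos _) one_pos
  set I := ∫ x in (0:ℝ)..1, Real.exp (2 * s * m x) with hI
  set a : ℝ := (Real.sqrt I)⁻¹ with ha
  have ha2 : a ^ 2 = I⁻¹ := by
    rw [ha, inv_pow, Real.sq_sqrt hIpos.le]
  have hnormφ : (∫ x in (0:ℝ)..1, Real.exp (2 * s * m x) * ((fun _ => a) x) ^ 2) = 1 := by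
    simp only
    rw [intervalIntegral.integral_mul_const, ← hI, ha2, mul_inv_cancel₀ hIpos.ne']
  have hmem : (∫ x in (0:ℝ)..1, Real.exp (2 * s * m x) *
      ((deriv (fun _ : ℝ => a) x) ^ 2 + c x * ((fun _ => a) x) ^ 2)) ∈
      {l : ℝ | ∃ φ : ℝ → ℝ, ContDiff ℝ 1 φ ∧
        (∫ x in (0:ℝ)..1, Real.exp (2 * s * m x) * (φ x) ^ 2) = 1 ∧
        l = ∫ x in (0:ℝ)..1, Real.exp (2 * s * m x) * ((deriv φ x) ^ 2 + c x * (φ x) ^ 2)} :=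
    ⟨fun _ => a, contDiff_const, hnormφ, rfl⟩
  have hbdd : BddBelow {l : ℝ | ∃ φ : ℝ → ℝ, ContDiff ℝ 1 φ ∧
      (∫ x in (0:ℝ)..1, Real.exp (2 * s * m x) * (φ x) ^ 2) = 1 ∧
      l = ∫ x in (0:ℝ)..1, Real.exp (2 * s * m x) * ((deriv φ x) ^ 2 + c x * (φ x) ^ 2)} := by
    refine ⟨Cmin, ?_⟩
    rintro l ⟨φ, hφ, hφnorm, rfl⟩
    have hφc : Continuous φ := hφ.continuous
    have hφ'c : Continuous (deriv φ) := hφ.continuous_deriv le_rfl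
    have h1 : ∀ x ∈ Set.Icc (0:ℝ) 1,
        Cmin * (Real.exp (2 * s * m x) * (φ x) ^ 2) ≤
        Real.exp (2 * s * m x) * ((deriv φ x) ^ 2 + c x * (φ x) ^ 2) := by
      intro x hx
      have he := Real.exp_pos (2 * s * m x)
      have := hbge x hx
      nlinarith [sq_nonneg (deriv φ x), sq_nonneg (φ x), mul_le_mul_of_nonneg_left this (sq_nonneg (φ x))]
    have hint1 : IntervalIntegrable (fun x => Cmin * (Real.exp (2 * s * m x) * (φ x) ^ 2))
        volume 0 1 := (continuous_const.mul (hexp.mul (hφc.pow 2))).intervalIntegrable 0 1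
    have hint2 : IntervalIntegrable
        (fun x => Real.exp (2 * s * m x) * ((deriv φ x) ^ 2 + c x * (φ x) ^ 2)) volume 0 1 :=
      (hexp.mul ((hφ'c.pow 2).add (hc.mul (hφc.pow 2)))).intervalIntegrable 0 1
    calc Cmin = Cmin * ∫ x in (0:ℝ)..1, Real.exp (2 * s * m x) * (φ x) ^ 2 := by
          rw [hφnorm, mul_one]
      _ = ∫ x in (0:ℝ)..1, Cmin * (Real.exp (2 * s * m x) * (φ x) ^ 2) := by
          rw [intervalIntegral.integral_const_mul]
      _ ≤ _ := intervalIntegral.integral_mono_on zero_le_one hint1 hint2 h1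
  refine (csInf_le hbdd hmem).trans ?_
  have hderiv : deriv (fun _ : ℝ => a) = fun _ => (0:ℝ) := by
    funext x; exact deriv_const x a
  have hle : (∫ x in (0:ℝ)..1, Real.exp (2 * s * m x) *
      ((deriv (fun _ : ℝ => a) x) ^ 2 + c x * ((fun _ => a) x) ^ 2)) ≤
      ∫ x in (0:ℝ)..1, Cmax * (Real.exp (2 * s * m x) * a ^ 2) := by
    apply intervalIntegral.integral_mono_on zero_le_one
    · refine Continuous.intervalIntegrable ?_ 0 1
      simp only [hderiv]
      exact hexp.mul (continuous_const.add (hc.mul continuous_const))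
    · exact (continuous_const.mul (hexp.mul continuous_const)).intervalIntegrable 0 1
    · intro x hx
      have he := (Real.exp_pos (2 * s * m x)).le
      simp only [hderiv]
      have := hble x hx
      nlinarith [sq_nonneg a, mul_le_mul_of_nonneg_left this (sq_nonneg a)]
  refine hle.trans_eq ?_
  rw [intervalIntegral.integral_const_mul, intervalIntegral.integral_mul_const, ← hI, ha2,
    mul_inv_cancel₀ hIpos.ne', mul_one]

set_option maxHeartbeats 1000000 in
/-- Lemma 3.1: under the normalization
`‖m'‖_∞ + ‖m''‖_∞ + max c − min c ≤ 1/2`, there is `M > 0` such that every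
principal eigenfunction satisfies `max_{[0,1]} w(s,·) ≤ M s^{1/2}` for all `s ≥ 1`. -/
theorem eigenfunction_sup_le_sqrt
    (m c : ℝ → ℝ) (hm : ContDiff ℝ 2 m) (hc : Continuous c)
    (hnorm : sSup ((fun x => |deriv m x|) '' Set.Icc (0:ℝ) 1) +
             sSup ((fun x => |deriv (deriv m) x|) '' Set.Icc (0:ℝ) 1) +
             (sSup (c '' Set.Icc (0:ℝ) 1) - sInf (c '' Set.Icc (0:ℝ) 1)) ≤ 1/2) :
    ∃ M > (0:ℝ), ∀ s ≥ (1:ℝ), ∀ v : ℝ → ℝ,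
      IsPrincipalEigenfunction m c (lambdaN m c s) s v →
      ∀ x ∈ Set.Icc (0:ℝ) 1, v x ≤ M * Real.sqrt s := by
  have hm1c : Continuous (deriv m) := hm.continuous_deriv (by norm_num)
  have hm2c : Continuous (deriv (deriv m)) := (contDiff_one_deriv hm).continuous_deriv le_rfl
  set K1 := sSup ((fun x => |deriv m x|) '' Set.Icc (0:ℝ) 1) with hK1def
  set K2 := sSup ((fun x => |deriv (deriv m) x|) '' Set.Icc (0:ℝ) 1) with hK2def
  set A := sSup ((fun x => |c x|) '' Set.Icc (0:ℝ) 1) with hAdef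
  have h01 : (0:ℝ) ∈ Set.Icc (0:ℝ) 1 := by norm_num
  have h11 : (1:ℝ) ∈ Set.Icc (0:ℝ) 1 := by norm_num
  have hK1b : ∀ x ∈ Set.Icc (0:ℝ) 1, |deriv m x| ≤ K1 := fun x hx =>
    le_csSup (isCompact_Icc.image hm1c.abs).bddAbove ⟨x, hx, rfl⟩
  have hK2b : ∀ x ∈ Set.Icc (0:ℝ) 1, |deriv (deriv m) x| ≤ K2 := fun x hx =>
    le_csSup (isCompact_Icc.image hm2c.abs).bddAbove ⟨x, hx, rfl⟩
  have hAb : ∀ x ∈ Set.Icc (0:ℝ) 1, |c x| ≤ A := fun x hx =>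
    le_csSup (isCompact_Icc.image hc.abs).bddAbove ⟨x, hx, rfl⟩
  have hK10 : 0 ≤ K1 := le_trans (abs_nonneg _) (hK1b 0 h01)
  have hK20 : 0 ≤ K2 := le_trans (abs_nonneg _) (hK2b 0 h01)
  have hA0 : 0 ≤ A := le_trans (abs_nonneg _) (hAb 0 h01)
  have hCc : sInf (c '' Set.Icc (0:ℝ) 1) ≤ sSup (c '' Set.Icc (0:ℝ) 1) := by
    have h1 : sInf (c '' Set.Icc (0:ℝ) 1) ≤ c 0 :=
      csInf_le (isCompact_Icc.image hc).bddBelow ⟨0, h01, rfl⟩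
    have h2 : c 0 ≤ sSup (c '' Set.Icc (0:ℝ) 1) :=
      le_csSup (isCompact_Icc.image hc).bddAbove ⟨0, h01, rfl⟩
    linarith
  have hK1half : K1 ≤ 1/2 := by linarith
  have hK2half : K2 ≤ 1/2 := by linarith
  have hCmaxA : sSup (c '' Set.Icc (0:ℝ) 1) ≤ A := by
    have hne : (c '' Set.Icc (0:ℝ) 1).Nonempty := ⟨c 0, 0, h01, rfl⟩
    apply csSup_le hne
    rintro y ⟨x, hx, rfl⟩
    exact (le_abs_self _).trans (hAb x hx)
  set B := 3 + 2*A with hBdef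
  set r := Real.sqrt (B + 1) with hrdef
  have hr0 : 0 ≤ r := Real.sqrt_nonneg _
  have hr2 : r ^ 2 = B + 1 := Real.sq_sqrt (by positivity)
  set D := 3/2 + r with hDdef
  have hD0 : (0:ℝ) < D := by positivity
  clear_value K1 K2 A B r D
  refine ⟨Real.sqrt (1 + 2*D), Real.sqrt_pos.mpr (by linarith), ?_⟩
  intro s hs v hv
  obtain ⟨hv2, hvpos, hode, hb0, hb1, hnorm1⟩ := hv
  have hs0 : (0:ℝ) < s := lt_of_lt_of_le one_pos hs
  have hvc : Continuous v := hv2.continuous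
  have hv1 : ContDiff ℝ 1 (deriv v) := contDiff_one_deriv hv2
  have hv'c : Continuous (deriv v) := hv1.continuous
  have hv''c : Continuous (deriv (deriv v)) := hv1.continuous_deriv le_rfl
  have hvd : ∀ x : ℝ, HasDerivAt v (deriv v x) x := fun x =>
    ((hv2.differentiable (by norm_num)) x).hasDerivAt
  have hv'd : ∀ x : ℝ, HasDerivAt (deriv v) (deriv (deriv v) x) x := fun x =>
    ((hv1.differentiable (by norm_num)) x).hasDerivAt
  set E := ∫ x in (0:ℝ)..1, (deriv v x) ^ 2 with hEdef
  have hE0 : 0 ≤ E :=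
    intervalIntegral.integral_nonneg zero_le_one (fun x _ => sq_nonneg _)
  clear_value E
  set F := Real.sqrt (E + 1) with hFdef
  have hF2 : F ^ 2 = E + 1 := Real.sq_sqrt (by linarith)
  have hFpos : 0 < F := Real.sqrt_pos.mpr (by linarith)
  have hF1 : 1 ≤ F := by
    calc (1:ℝ) = Real.sqrt 1 := Real.sqrt_one.symm
    _ ≤ F := Real.sqrt_le_sqrt (by linarith)
  clear_value F
  -- Step A: pointwise bound in terms of F
  have habs2vv' : (∫ x in (0:ℝ)..1, |2 * v x * deriv v x|) ≤ 2 * F := by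
    have hpt : ∀ x ∈ Set.Icc (0:ℝ) 1,
        |2 * v x * deriv v x| ≤ F * (v x) ^ 2 + (deriv v x) ^ 2 / F := by
      intro x _
      rw [← mul_le_mul_iff_left₀ hFpos]
      have heq : (F * v x ^ 2 + deriv v x ^ 2 / F) * F = F * v x ^ 2 * F + deriv v x ^ 2 := by
        field_simp
      rw [heq]
      rcases abs_cases (2 * v x * deriv v x) with ⟨h, _⟩ | ⟨h, _⟩ <;> rw [h]
      · linarith only [sq_nonneg (F * v x - deriv v x)]
      · linarith only [sq_nonneg (F * v x + deriv v x)]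
    have hmono : (∫ x in (0:ℝ)..1, |2 * v x * deriv v x|)
        ≤ ∫ x in (0:ℝ)..1, (F * (v x) ^ 2 + (deriv v x) ^ 2 / F) :=
      intervalIntegral.integral_mono_on zero_le_one
        (((continuous_const.mul hvc).mul hv'c).abs.intervalIntegrable 0 1)
        (((continuous_const.mul (hvc.pow 2)).add ((hv'c.pow 2).div_const F)).intervalIntegrable 0 1)
        hpt
    have hsplit : (∫ x in (0:ℝ)..1, (F * (v x) ^ 2 + (deriv v x) ^ 2 / F))
        = F * (∫ x in (0:ℝ)..1, (v x) ^ 2) + (∫ x in (0:ℝ)..1, (deriv v x) ^ 2) / F := by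
      rw [intervalIntegral.integral_add (f := fun x => F * (v x) ^ 2) (g := fun x => (deriv v x) ^ 2 / F)
            ((continuous_const.mul (hvc.pow 2)).intervalIntegrable 0 1)
            (((hv'c.pow 2).div_const F).intervalIntegrable 0 1),
          intervalIntegral.integral_const_mul, intervalIntegral.integral_div]
    have hEF : E / F ≤ F := by
      rw [div_le_iff₀ hFpos]
      have hFF : F * F = E + 1 := by rw [← hF2]; ring
      linarith
    rw [hsplit, hnorm1, ← hEdef] at hmono
    linarith only [hmono, hEF]
  have hpoint : ∀ x ∈ Set.Icc (0:ℝ) 1, (v x) ^ 2 ≤ 1 + 2 * F := by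
    obtain ⟨x₀, hx₀, hmin⟩ := isCompact_Icc.exists_isMinOn ⟨0, h01⟩
      ((hvc.pow 2).continuousOn : ContinuousOn (fun x => (v x) ^ 2) _)
    have hx₀le : (v x₀) ^ 2 ≤ 1 := by
      have hc1 : (∫ x in (0:ℝ)..1, (v x₀) ^ 2) ≤ ∫ x in (0:ℝ)..1, (v x) ^ 2 :=
        intervalIntegral.integral_mono_on zero_le_one intervalIntegrable_const
          ((hvc.pow 2).intervalIntegrable 0 1) (fun x hx => hmin hx)
      rw [hnorm1, intervalIntegral.integral_const] at hc1
      simpa using hc1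
    intro x hx
    have hftc : (∫ t in x₀..x, (2 * v t * deriv v t)) = (v x) ^ 2 - (v x₀) ^ 2 := by
      apply intervalIntegral.integral_eq_sub_of_hasDerivAt
      · intro t _
        have h := (hvd t).pow 2
        norm_num at h
        convert h using 1 <;> rfl
      · exact ((continuous_const.mul hvc).mul hv'c).intervalIntegrable _ _
    have habs := abs_intInt_le (g := fun t => 2 * v t * deriv v t)
      ((continuous_const.mul hvc).mul hv'c) hx₀ hx
    rw [hftc] at habs
    have h1 : (v x) ^ 2 - (v x₀) ^ 2 ≤ 2 * F :=
      le_trans (le_abs_self _) (habs.trans habs2vv')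
    linarith only [h1, hx₀le]
  -- Step B : energy bound
  set lam := lambdaN m c s with hlamdef
  have hlamA : lam ≤ A := (lambdaN_le_sSup m c hm.continuous hc s).trans hCmaxA
  clear_value lam
  have hibp : (∫ x in (0:ℝ)..1, v x * deriv (deriv v) x)
      = v 1 * deriv v 1 - v 0 * deriv v 0 - ∫ x in (0:ℝ)..1, deriv v x * deriv v x :=
    intervalIntegral.integral_mul_deriv_eq_deriv_mul
      (fun x _ => hvd x) (fun x _ => hv'd x)
      (hv'c.intervalIntegrable 0 1) (hv''c.intervalIntegrable 0 1)
  have hEsq : E = ∫ x in (0:ℝ)..1, deriv v x * deriv v x := by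
    rw [hEdef]; congr 1; funext x; ring
  have hode' : (∫ x in (0:ℝ)..1, v x * deriv (deriv v) x)
      = ∫ x in (0:ℝ)..1, ((s ^ 2 * (deriv m x) ^ 2 + s * deriv (deriv m) x + c x) - lam) * (v x) ^ 2 := by
    apply intervalIntegral.integral_congr_ae
    have hone : ∀ᵐ x : ℝ ∂volume, x ≠ 1 := by
      rw [MeasureTheory.ae_iff]
      convert Real.volume_singleton (a := 1) using 2
      ext x; simp
    filter_upwards [hone] with x hx1 hxI
    have hxIoo : x ∈ Set.Ioo (0:ℝ) 1 := by
      rw [Set.uIoc_of_le zero_le_one] at hxI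
      exact ⟨hxI.1, lt_of_le_of_ne hxI.2 hx1⟩
    have h := hode x hxIoo
    have hv'' : deriv (deriv v) x
        = ((s ^ 2 * (deriv m x) ^ 2 + s * deriv (deriv m) x + c x) - lam) * v x := by
      linarith [h]
    rw [hv'']; ring
  have hqsplit : (∫ x in (0:ℝ)..1,
        ((s ^ 2 * (deriv m x) ^ 2 + s * deriv (deriv m) x + c x) - lam) * (v x) ^ 2)
      = (∫ x in (0:ℝ)..1, (s ^ 2 * (deriv m x) ^ 2 + s * deriv (deriv m) x + c x) * (v x) ^ 2)
        - lam := by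
    have hqc : Continuous fun x => (s ^ 2 * (deriv m x) ^ 2 + s * deriv (deriv m) x + c x) :=
      ((continuous_const.mul (hm1c.pow 2)).add (continuous_const.mul hm2c)).add hc
    have : (∫ x in (0:ℝ)..1,
        ((s ^ 2 * (deriv m x) ^ 2 + s * deriv (deriv m) x + c x) - lam) * (v x) ^ 2)
      = (∫ x in (0:ℝ)..1, (s ^ 2 * (deriv m x) ^ 2 + s * deriv (deriv m) x + c x) * (v x) ^ 2)
        - ∫ x in (0:ℝ)..1, lam * (v x) ^ 2 := by
      rw [← intervalIntegral.integral_sub (f := fun x => (s ^ 2 * (deriv m x) ^ 2 + s * deriv (deriv m) x + c x) * (v x) ^ 2) (g := fun x => lam * (v x) ^ 2) ((hqc.mul (hvc.pow 2)).intervalIntegrable 0 1)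
        ((continuous_const.mul (hvc.pow 2)).intervalIntegrable 0 1)]
      congr 1; funext x; ring
    rw [this, intervalIntegral.integral_const_mul, hnorm1, mul_one]
  have hqlow : -(s ^ 2 * K1 ^ 2 + s * K2 + A)
      ≤ ∫ x in (0:ℝ)..1, (s ^ 2 * (deriv m x) ^ 2 + s * deriv (deriv m) x + c x) * (v x) ^ 2 := by
    have hqc : Continuous fun x => (s ^ 2 * (deriv m x) ^ 2 + s * deriv (deriv m) x + c x) :=
      ((continuous_const.mul (hm1c.pow 2)).add (continuous_const.mul hm2c)).add hc
    have hpt : ∀ x ∈ Set.Icc (0:ℝ) 1,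
        -(s ^ 2 * K1 ^ 2 + s * K2 + A) * (v x) ^ 2
          ≤ (s ^ 2 * (deriv m x) ^ 2 + s * deriv (deriv m) x + c x) * (v x) ^ 2 := by
      intro x hx
      have h1 := hK1b x hx
      have h2 := hK2b x hx
      have h3 := hAb x hx
      have h1' : (deriv m x) ^ 2 ≤ K1 ^ 2 := by
        rw [← sq_abs]; exact pow_le_pow_left₀ (abs_nonneg _) h1 2
      have h2' : -K2 ≤ deriv (deriv m) x := (abs_le.mp h2).1
      have h3' : -A ≤ c x := (abs_le.mp h3).1
      have t1 : 0 ≤ s ^ 2 * (deriv m x) ^ 2 := by positivity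
      have t2 := mul_le_mul_of_nonneg_left h2' hs0.le
      have hK1s : 0 ≤ s ^ 2 * K1 ^ 2 := by positivity
      have hq : -(s ^ 2 * K1 ^ 2 + s * K2 + A)
          ≤ s ^ 2 * (deriv m x) ^ 2 + s * deriv (deriv m) x + c x := by
        linarith only [t1, t2, hK1s, h3']
      exact mul_le_mul_of_nonneg_right hq (sq_nonneg (v x))
    have := intervalIntegral.integral_mono_on (μ := volume) (f := fun x => -(s ^ 2 * K1 ^ 2 + s * K2 + A) * (v x) ^ 2) (g := fun x => (s ^ 2 * (deriv m x) ^ 2 + s * deriv (deriv m) x + c x) * (v x) ^ 2) zero_le_one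
      ((continuous_const.mul (hvc.pow 2)).intervalIntegrable 0 1)
      ((hqc.mul (hvc.pow 2)).intervalIntegrable 0 1) hpt
    rwa [intervalIntegral.integral_const_mul, hnorm1, mul_one] at this
  -- combine energy identity
  have hbdry : v 1 * deriv v 1 - v 0 * deriv v 0 ≤ s * (1 + 2 * F) := by
    rw [hb0, hb1]
    have h0 := hpoint 0 h01
    have h1 := hpoint 1 h11
    have hm0 := abs_le.mp ((hK1b 0 h01).trans hK1half)
    have hm1 := abs_le.mp ((hK1b 1 h11).trans hK1half)
    have hv02 := sq_nonneg (v 0)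
    have hv12 := sq_nonneg (v 1)
    have e0 : v 0 * (s * v 0 * deriv m 0) = s * deriv m 0 * (v 0) ^ 2 := by ring
    have e1 : v 1 * (s * v 1 * deriv m 1) = s * deriv m 1 * (v 1) ^ 2 := by ring
    rw [e0, e1]
    have hA1 : s * deriv m 1 ≤ s * (1/2) := mul_le_mul_of_nonneg_left hm1.2 hs0.le
    have hb1' : s * deriv m 1 * (v 1) ^ 2 ≤ s * (1/2) * (v 1) ^ 2 :=
      mul_le_mul_of_nonneg_right hA1 hv12
    have hA0' : s * (-(1/2)) ≤ s * deriv m 0 := mul_le_mul_of_nonneg_left hm0.1 hs0.le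
    have hb0' : s * (-(1/2)) * (v 0) ^ 2 ≤ s * deriv m 0 * (v 0) ^ 2 :=
      mul_le_mul_of_nonneg_right hA0' hv02
    have hs1' : s * (1/2) * (v 1) ^ 2 ≤ s * (1/2) * (1 + 2*F) :=
      mul_le_mul_of_nonneg_left h1 (by positivity)
    have hs0' : s * (1/2) * (v 0) ^ 2 ≤ s * (1/2) * (1 + 2*F) :=
      mul_le_mul_of_nonneg_left h0 (by positivity)
    linarith only [hb1', hb0', hs1', hs0']
  have hEbound : E ≤ s * (1 + 2 * F) + lam + (s ^ 2 * K1 ^ 2 + s * K2 + A) := by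
    have : E = v 1 * deriv v 1 - v 0 * deriv v 0
        - ((∫ x in (0:ℝ)..1, (s ^ 2 * (deriv m x) ^ 2 + s * deriv (deriv m) x + c x) * (v x) ^ 2)
            - lam) := by
      rw [hEsq, ← hqsplit, ← hode', hibp]; ring
    linarith only [this, hqlow, hbdry]
  have hFs : F ≤ D * s := by
    have hK1sq : K1 ^ 2 ≤ 1/4 := by
      have := pow_le_pow_left₀ hK10 hK1half 2
      norm_num at this
      linarith only [this]
    have hFsq : F ^ 2 ≤ 2 * s * F + B * s ^ 2 := by
      have hs2 : 1 ≤ s ^ 2 := one_le_pow₀ hs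
      have hss : s ≤ s ^ 2 := by
        have := mul_le_mul_of_nonneg_left hs hs0.le
        linarith only [this, sq (a := s) ▸ (by ring_nf : s * s = s ^ 2)]
      have hQ1 : s ^ 2 * K1 ^ 2 ≤ s ^ 2 * (1/4) := by
        apply mul_le_mul_of_nonneg_left hK1sq (sq_nonneg s)
      have hQ2 : s * K2 ≤ s * (1/2) := mul_le_mul_of_nonneg_left hK2half hs0.le
      have hAs : A ≤ A * s ^ 2 := le_mul_of_one_le_right hA0 hs2
      have hB : B * s ^ 2 = 3 * s ^ 2 + 2 * (A * s ^ 2) := by rw [hBdef]; ring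
      linarith only [hEbound, hlamA, hF2, hQ1, hQ2, hAs, hB, hs2, hss]
    by_contra hcon
    push_neg at hcon
    have hDs : D * s = 3/2 * s + r * s := by rw [hDdef]; ring
    have h1 : r * s < F - s := by
      have hrs : 0 ≤ r * s := mul_nonneg hr0 hs0.le
      linarith only [hcon, hDs, hs0, hrs]
    have h2 : (r * s) * (r * s) < (F - s) * (F - s) :=
      mul_self_lt_mul_self (mul_nonneg hr0 hs0.le) h1
    have e1 : (F - s) * (F - s) = F ^ 2 - 2 * s * F + s ^ 2 := by ring
    have e2 : (r * s) * (r * s) = (B + 1) * s ^ 2 := by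
      have : (r * s) * (r * s) = r ^ 2 * s ^ 2 := by ring
      rw [this, hr2]
    linarith only [hFsq, h2, e1, e2]
  -- Step C: conclusion
  intro x hx
  have h1 : (v x) ^ 2 ≤ (1 + 2 * D) * s := by
    have hp := hpoint x hx
    have he : (1 + 2 * D) * s = s + 2 * (D * s) := by ring
    linarith only [hp, hFs, hs, he]
  calc v x = Real.sqrt ((v x) ^ 2) := (Real.sqrt_sq (hvpos x hx).le).symm
    _ ≤ Real.sqrt ((1 + 2 * D) * s) := Real.sqrt_le_sqrt h1
    _ = Real.sqrt (1 + 2 * D) * Real.sqrt s := Real.sqrt_mul (by linarith) s
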